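/- Let g(x) = (1/n)∑ᵢ vᵢ ∇fᵢ(x) with random weights satisfying E[vᵢ²] = 1/pᵢ and E[vᵢvⱼ] = 1 for i ≠ j (independent sampling). Then E‖g(x)‖² = ‖∇f(x)‖² + (1/n²)∑ᵢ (1/pᵢ − 1)‖∇fᵢ(x)‖². -/

import Mathlib

open MeasureTheory ProbabilityTheory

theorem second_moment_independent_sampling {Ω : Type*} [MeasureSpace Ω]
    [IsProbabilityMeasure (ℙ : Measure Ω)] {d : ℕ}
    (n : ℕ) (hn : 0 < n)
    (p : Fin n → ℝ) (hp : ∀ i, 0 < p i) (hp1 : ∀ i, p i ≤ 1)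
    (f : Fin n → EuclideanSpace ℝ (Fin d) → ℝ)
    (hdiff : ∀ i x, DifferentiableAt ℝ (f i) x)
    (v : Fin n → Ω → ℝ)
    (hv2 : ∀ i, MemLp (v i) 2 ℙ)
    (hmean : ∀ i, ∫ ω, v i ω = 1)
    (hsq : ∀ i, ∫ ω, (v i ω) ^ 2 = 1 / p i)
    (hcross : ∀ i j, i ≠ j → ∫ ω, v i ω * v j ω = 1)
    (x : EuclideanSpace ℝ (Fin d)) :
    ∫ ω, ‖(n : ℝ)⁻¹ • ∑ i, v i ω • gradient (f i) x‖ ^ 2 =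
      ‖(n : ℝ)⁻¹ • ∑ i, gradient (f i) x‖ ^ 2 +
        ((n : ℝ) ^ 2)⁻¹ * ∑ i, (1 / p i - 1) * ‖gradient (f i) x‖ ^ 2 := by
  have hint : ∀ i j : Fin n, Integrable (fun ω => v i ω * v j ω) ℙ := by
    intro i j
    have h : MemLp (v i • v j) 1 ℙ := by
      refine (hv2 j).smul (hv2 i) (hpqr := ⟨?_⟩)
      rw [inv_one]
      exact ENNReal.inv_two_add_inv_two
    have h' := h.integrable le_rfl
    simp only [smul_eq_mul] at h'
    exact h'
  have hns : ∀ y : EuclideanSpace ℝ (Fin d), ‖(n : ℝ)⁻¹ • y‖ ^ 2 = ((n : ℝ) ^ 2)⁻¹ * ‖y‖ ^ 2 := by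
    intro y
    rw [norm_smul, mul_pow, Real.norm_eq_abs, abs_of_nonneg (by positivity), inv_pow]
  have hexp : ∀ (c : Fin n → ℝ),
      ‖∑ i, c i • gradient (f i) x‖ ^ 2 =
        ∑ i, ∑ j, (c i * c j) * inner ℝ (gradient (f i) x) (gradient (f j) x) := by
    intro c
    rw [← real_inner_self_eq_norm_sq, sum_inner]
    simp_rw [inner_sum, real_inner_smul_left, real_inner_smul_right, ← mul_assoc]
  have hexp1 : ‖∑ i, gradient (f i) x‖ ^ 2 =
      ∑ i, ∑ j, (inner ℝ (gradient (f i) x) (gradient (f j) x) : ℝ) := by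
    have := hexp (fun _ => (1 : ℝ))
    simpa using this
  have hL : ∫ ω, ‖(n : ℝ)⁻¹ • ∑ i, v i ω • gradient (f i) x‖ ^ 2 =
      ((n : ℝ) ^ 2)⁻¹ * ∑ i, ∑ j, (∫ ω, v i ω * v j ω) *
        inner ℝ (gradient (f i) x) (gradient (f j) x) := by
    simp_rw [hns, hexp]
    rw [integral_const_mul]
    congr 1
    rw [integral_finset_sum _ (fun i _ => integrable_finset_sum _
      (fun j _ => (hint i j).mul_const _))]
    refine Finset.sum_congr rfl fun i _ => ?_
    rw [integral_finset_sum _ (fun j _ => (hint i j).mul_const _)]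
    refine Finset.sum_congr rfl fun j _ => ?_
    rw [integral_mul_const]
  rw [hL, hns, hexp1, ← mul_add]
  congr 1
  have key : ∀ i j : Fin n,
      (∫ ω, v i ω * v j ω) * (inner ℝ (gradient (f i) x) (gradient (f j) x) : ℝ) =
      (inner ℝ (gradient (f i) x) (gradient (f j) x) : ℝ) +
        (if j = i then (1 / p i - 1) * ‖gradient (f i) x‖ ^ 2 else 0) := by
    intro i j
    by_cases h : j = i
    · subst h
      have h2 : (∫ ω, v j ω * v j ω) = 1 / p j := by
        simpa [pow_two] using hsq j
      rw [h2]
      simp only [if_true, real_inner_self_eq_norm_sq]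
      ring
    · rw [hcross i j (fun hh => h hh.symm)]
      simp [h]
  simp_rw [key, Finset.sum_add_distrib, Finset.sum_ite_eq', Finset.mem_univ, if_true]
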